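/- arXiv:1907.01335 — 3 statements merged into one kernel-verified Lean document; each statement's English description precedes it below -/
import Mathlib

section
/- For an odd prime t and integers d, d', the rank-2 lattices Λ_{t,d} and Λ_{t,d'} with Gram matrices [[2d, t],[t, 0]] and [[2d', t],[t, 0]] are isomorphic if and only if d ≡ d' (mod t) or d·d' ≡ 1 (mod t). -/
open Matrix

/-- Two Gram matrices define isomorphic lattices iff some change of basis in GL₂(ℤ)
transforms one into the other. -/
def LatticeIso (G₁ G₂ : Matrix (Fin 2) (Fin 2) ℤ) : Prop :=
  ∃ M : Matrix (Fin 2) (Fin 2) ℤ, IsUnit M.det ∧ Mᵀ * G₁ * M = G₂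

lemma key_arith (t a b c e d d' : ℤ) (ht : Prime t)
    (h1 : d * a ^ 2 + t * a * c = d')
    (h2 : 2 * d * a * b + t * (a * e + c * b) = t)
    (h3 : b * (d * b + t * e) = 0) :
    t ∣ (d' - d) ∨ t ∣ (1 - d * d') := by
  have ht0 : t ≠ 0 := ht.ne_zero
  rcases mul_eq_zero.mp h3 with hb | hbe
  · -- b = 0
    subst hb
    left
    have hae : a * e = 1 := by
      have : t * (a * e) = t * 1 := by linarith [h2]
      exact mul_left_cancel₀ ht0 this
    have ha : a = 1 ∨ a = -1 := Int.isUnit_iff.mp (IsUnit.of_mul_eq_one (a := a) e hae)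
    have ha2 : a ^ 2 = 1 := by rcases ha with h | h <;> simp [h]
    refine ⟨a * c, by rw [← h1, ha2]; ring⟩
  · -- d*b + t*e = 0
    have hte : t * e = -(d * b) := by linarith
    have hfac : b * (d * a + t * c) = t := by linear_combination h2 - a * hte
    rcases (ht.irreducible.isUnit_or_isUnit hfac.symm) with hu | hu
    · -- b = ±1, then t ∣ d
      left
      have hb1 : b = 1 ∨ b = -1 := Int.isUnit_iff.mp hu
      have htd : t ∣ d := by
        rcases hb1 with h | h <;> subst h
        · exact ⟨-e, by linarith⟩
        · exact ⟨e, by linarith⟩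
      obtain ⟨k, hk⟩ := htd
      refine ⟨k * a ^ 2 + a * c - k, by rw [← h1, hk]; ring⟩
    · -- d*a + t*c = ±1
      right
      rcases Int.isUnit_iff.mp hu with h | h
      · exact ⟨2 * c - t * c ^ 2 - d * a * c, by
          linear_combination d * h1 - (d * a - t * c + 1) * h⟩
      · exact ⟨-2 * c - t * c ^ 2 - d * a * c, by
          linear_combination d * h1 - (d * a - t * c - 1) * h⟩

/-- For an odd prime t, the lattices Λ_{t,d} and Λ_{t,d'} with Gram matrices
[[2d, t],[t, 0]] and [[2d', t],[t, 0]] are isomorphic iff d ≡ d' (mod t) or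
d·d' ≡ 1 (mod t). -/
theorem stmt_7 (t : ℕ) (ht : t.Prime) (hodd : Odd t) (d d' : ℤ) :
    LatticeIso !![2 * d, (t : ℤ); (t : ℤ), 0] !![2 * d', (t : ℤ); (t : ℤ), 0] ↔
      (d ≡ d' [ZMOD (t : ℤ)] ∨ d * d' ≡ 1 [ZMOD (t : ℤ)]) := by
  have htZ : Prime (t : ℤ) := Nat.prime_iff_prime_int.mp ht
  constructor
  · rintro ⟨M, hu, hM⟩
    set a := M 0 0; set b := M 0 1; set c := M 1 0; set e := M 1 1
    have h00 := congrFun (congrFun hM 0) 0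
    have h01 := congrFun (congrFun hM 0) 1
    have h11 := congrFun (congrFun hM 1) 1
    simp [Matrix.mul_apply, Fin.sum_univ_two, Matrix.transpose_apply] at h00 h01 h11
    have h1 : d * a ^ 2 + (t : ℤ) * a * c = d' := by nlinarith [h00]
    have h2 : 2 * d * a * b + (t : ℤ) * (a * e + c * b) = t := by nlinarith [h01]
    have h3 : b * (d * b + (t : ℤ) * e) = 0 := by nlinarith [h11]
    have := key_arith (t : ℤ) a b c e d d' htZ h1 h2 h3
    rcases this with h | h
    · exact Or.inl ((Int.modEq_iff_dvd).mpr h)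
    · exact Or.inr ((Int.modEq_iff_dvd).mpr h)
  · rintro (h | h)
    · obtain ⟨k, hk⟩ := (Int.modEq_iff_dvd).mp h
      refine ⟨!![1, 0; k, 1], ?_, ?_⟩
      · simp [Matrix.det_fin_two_of]
      · ext i j
        fin_cases i <;> fin_cases j <;>
          simp [Matrix.mul_apply, Fin.sum_univ_two, Matrix.transpose_apply,
            Matrix.vecHead, Matrix.vecTail] <;>
          linarith [hk]
    · obtain ⟨m, hm⟩ := (Int.modEq_iff_dvd).mp h
      refine ⟨!![d', (t : ℤ); m, -d], ?_, ?_⟩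
      · have : (!![d', (t : ℤ); m, -d]).det = -1 := by
          simp [Matrix.det_fin_two_of]; linarith
        rw [this]; exact isUnit_one.neg
      · ext i j
        fin_cases i <;> fin_cases j <;>
          simp [Matrix.mul_apply, Fin.sum_univ_two, Matrix.transpose_apply,
            Matrix.vecHead, Matrix.vecTail]
        · linear_combination (-2 * d') * hm
        · linear_combination (-(t : ℤ)) * hm
        · linear_combination (-(t : ℤ)) * hm
        · ring
end

section
/- Let t be an odd prime and d an integer coprime to t. Then the discriminant group Λ_{t,d}*/Λ_{t,d} of the lattice with Gram matrix [[2d, t],[t, 0]] is cyclic of order t². -/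
/-- The standard lattice ℤ² inside ℚ². -/
def latticeZ : Submodule ℤ (Fin 2 → ℚ) :=
  Submodule.span ℤ (Set.range fun i => (Pi.single i 1 : Fin 2 → ℚ))

/-- The bilinear form on ℚ² = Λ ⊗ ℚ with (integral) Gram matrix G. -/
noncomputable def formQ (G : Matrix (Fin 2) (Fin 2) ℤ) :
    (Fin 2 → ℚ) →ₗ[ℚ] (Fin 2 → ℚ) →ₗ[ℚ] ℚ :=
  Matrix.toBilin' (G.map ((↑) : ℤ → ℚ))

/-- The dual lattice Λ* = {x ∈ Λ⊗ℚ : B(x, Λ) ⊆ ℤ}. -/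
noncomputable def dualLattice (G : Matrix (Fin 2) (Fin 2) ℤ) : Submodule ℤ (Fin 2 → ℚ) :=
  ⨅ y ∈ latticeZ, Submodule.comap (((formQ G).flip y).restrictScalars ℤ)
    (LinearMap.range (Algebra.linearMap ℤ ℚ))

lemma mem_latticeZ {x : Fin 2 → ℚ} :
    x ∈ latticeZ ↔ ∀ i, ∃ m : ℤ, x i = m := by
  constructor
  · intro hx
    induction hx using Submodule.span_induction with
    | mem y hy =>
      rcases hy with ⟨i, rfl⟩
      intro j
      rcases eq_or_ne j i with rfl | h
      · exact ⟨1, by simp⟩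
      · exact ⟨0, by simp [Pi.single_apply, h]⟩
    | zero => exact fun i => ⟨0, by simp⟩
    | add y z hy hz ihy ihz =>
      intro i
      obtain ⟨m, hm⟩ := ihy i; obtain ⟨n, hn⟩ := ihz i
      exact ⟨m + n, by simp [hm, hn]⟩
    | smul c y hy ihy =>
      intro i
      obtain ⟨m, hm⟩ := ihy i
      exact ⟨c * m, by simp [hm]⟩
  · intro h
    choose m hm using h
    have hx : x = (m 0) • (Pi.single 0 1 : Fin 2 → ℚ) + (m 1) • (Pi.single 1 1 : Fin 2 → ℚ) := by
      funext i
      fin_cases i <;> simp [hm, Pi.single_apply]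
    rw [hx]
    exact Submodule.add_mem _
      (Submodule.smul_mem _ _ (Submodule.subset_span ⟨0, rfl⟩))
      (Submodule.smul_mem _ _ (Submodule.subset_span ⟨1, rfl⟩))

lemma mem_dualLattice {G : Matrix (Fin 2) (Fin 2) ℤ} {x : Fin 2 → ℚ} :
    x ∈ dualLattice G ↔ ∀ y ∈ latticeZ, ∃ k : ℤ, (k : ℚ) = formQ G x y := by
  simp [dualLattice, Submodule.mem_iInf, Submodule.mem_comap, LinearMap.mem_range,
    Algebra.linearMap_apply, algebraMap.coe_inj]

lemma formQ_single (G : Matrix (Fin 2) (Fin 2) ℤ) (x : Fin 2 → ℚ) (j : Fin 2) :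
    formQ G x (Pi.single j 1) = x 0 * (G 0 j : ℚ) + x 1 * (G 1 j : ℚ) := by
  simp [formQ, Matrix.toBilin'_apply, Fin.sum_univ_two, Pi.single_apply, Matrix.map_apply]

lemma mem_dualLattice' {t d : ℤ} {x : Fin 2 → ℚ} :
    x ∈ dualLattice !![2 * d, t; t, 0] ↔
      (∃ k : ℤ, (k : ℚ) = (2 * d : ℤ) * x 0 + (t : ℚ) * x 1) ∧
      (∃ k : ℤ, (k : ℚ) = (t : ℚ) * x 0) := by
  rw [mem_dualLattice]
  constructor
  · intro h
    refine ⟨?_, ?_⟩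
    · obtain ⟨k, hk⟩ := h (Pi.single 0 1) (Submodule.subset_span ⟨0, rfl⟩)
      exact ⟨k, by rw [hk, formQ_single]; push_cast; simp [Matrix.cons_val_zero, Matrix.cons_val_one]; ring⟩
    · obtain ⟨k, hk⟩ := h (Pi.single 1 1) (Submodule.subset_span ⟨1, rfl⟩)
      exact ⟨k, by rw [hk, formQ_single]; push_cast; simp [Matrix.cons_val_zero, Matrix.cons_val_one]; ring⟩
  · rintro ⟨⟨k0, hk0⟩, ⟨k1, hk1⟩⟩ y hy
    induction hy using Submodule.span_induction with
    | mem z hz =>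
      rcases hz with ⟨j, rfl⟩
      fin_cases j
      · exact ⟨k0, by rw [hk0, formQ_single]; push_cast; simp; ring⟩
      · exact ⟨k1, by rw [hk1, formQ_single]; push_cast; simp; ring⟩
    | zero => exact ⟨0, by simp⟩
    | add z w hz hw ihz ihw =>
      obtain ⟨a, ha⟩ := ihz; obtain ⟨b, hb⟩ := ihw
      exact ⟨a + b, by push_cast [ha, hb]; simp [map_add]⟩
    | smul c z hz ihz =>
      obtain ⟨a, ha⟩ := ihz
      exact ⟨c * a, by push_cast [ha]; rw [LinearMap.map_smul_of_tower]; simp [zsmul_eq_mul]⟩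

/-- The discriminant group Λ*/Λ. -/
noncomputable abbrev discGroup (G : Matrix (Fin 2) (Fin 2) ℤ) :=
  dualLattice G ⧸ (latticeZ.comap (dualLattice G).subtype)

/-- For an odd prime t and d coprime to t, the discriminant group of the lattice
Λ_{t,d} with Gram matrix [[2d, t],[t, 0]] is cyclic of order t². -/
theorem stmt_9 (t : ℕ) (ht : t.Prime) (hodd : Odd t) (d : ℤ) (hcop : IsCoprime d (t : ℤ)) :
    IsAddCyclic (discGroup !![2 * d, (t : ℤ); (t : ℤ), 0]) ∧
      Nat.card (discGroup !![2 * d, (t : ℤ); (t : ℤ), 0]) = t ^ 2 := by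
  have htQ : (t : ℚ) ≠ 0 := Nat.cast_ne_zero.mpr ht.ne_zero
  set G : Matrix (Fin 2) (Fin 2) ℤ := !![2 * d, (t : ℤ); (t : ℤ), 0] with hG
  -- key integrality: for x in the dual, t² x₁ is an integer
  have key : ∀ x ∈ dualLattice G, ∃ k : ℤ, (k : ℚ) = (t : ℚ) ^ 2 * x 1 := by
    intro x hx
    obtain ⟨⟨k0, hk0⟩, ⟨k1, hk1⟩⟩ := mem_dualLattice'.mp hx
    refine ⟨t * k0 - 2 * d * k1, ?_⟩
    push_cast at hk0 hk1 ⊢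
    linear_combination (t:ℚ) * hk0 - 2 * (d:ℚ) * hk1
  -- the additive map f : dual → ℤ, x ↦ t² x₁
  have hf : ∀ x : dualLattice G, (((t : ℚ) ^ 2 * x.1 1).num : ℚ) = (t : ℚ) ^ 2 * x.1 1 := by
    intro x
    obtain ⟨k, hk⟩ := key x.1 x.2
    rw [← hk, Rat.num_intCast]
  set f : dualLattice G → ℤ := fun x => ((t : ℚ) ^ 2 * x.1 1).num with hfdef
  have hfQ : ∀ x : dualLattice G, ((f x : ℤ) : ℚ) = (t : ℚ) ^ 2 * x.1 1 := hf
  have hfadd : ∀ x y : dualLattice G, f (x + y) = f x + f y := by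
    intro x y
    have : ((f (x + y) : ℤ) : ℚ) = ((f x + f y : ℤ) : ℚ) := by
      push_cast
      rw [hfQ, hfQ, hfQ]
      have : ((x + y : dualLattice G) : Fin 2 → ℚ) 1 = x.1 1 + y.1 1 := rfl
      rw [this]; ring
    exact_mod_cast this
  set F : dualLattice G →+ ℤ := AddMonoidHom.mk' f hfadd with hFdef
  set φ : dualLattice G →ₗ[ℤ] ZMod (t ^ 2) :=
    ((Int.castAddHom (ZMod (t ^ 2))).comp F).toIntLinearMap with hφdef
  have hφ : ∀ x : dualLattice G, φ x = ((f x : ℤ) : ZMod (t ^ 2)) := fun x => rfl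
  -- coprimality facts
  have h2t : IsCoprime (2 : ℤ) (t : ℤ) := by
    obtain ⟨k, hk⟩ := hodd
    exact ⟨-(k : ℤ), 1, by push_cast [hk]; ring⟩
  have h2dt : IsCoprime (2 * d) ((t : ℤ)) := h2t.mul_left hcop
  -- kernel computation
  have hker : latticeZ.comap (dualLattice G).subtype = LinearMap.ker φ := by
    ext x
    rw [Submodule.mem_comap, LinearMap.mem_ker, hφ]
    constructor
    · intro hx
      obtain ⟨m, hm⟩ := mem_latticeZ.mp hx 1
      have hm' : x.1 1 = (m : ℚ) := hm
      have hfx : f x = (t : ℤ) ^ 2 * m := by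
        have h1 := hfQ x
        rw [hm'] at h1
        exact_mod_cast h1
      rw [hfx, ZMod.intCast_zmod_eq_zero_iff_dvd]
      exact ⟨m, by push_cast; ring⟩
    · intro hx
      rw [ZMod.intCast_zmod_eq_zero_iff_dvd] at hx
      obtain ⟨c, hc⟩ := hx
      have hx1 : x.1 1 = (c : ℚ) := by
        have h1 := hfQ x
        rw [hc] at h1
        push_cast at h1
        field_simp at h1
        linarith [h1]
      obtain ⟨⟨k0, hk0⟩, ⟨k1, hk1⟩⟩ := mem_dualLattice'.mp x.2
      obtain ⟨u, v, huv⟩ := h2dt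
      have huvQ : (u : ℚ) * (2 * d) + (v : ℚ) * t = 1 := by exact_mod_cast huv
      push_cast at hk0
      have h5 : (x.1 0) = (u : ℚ) * (2 * d * x.1 0) + (v : ℚ) * ((t : ℚ) * x.1 0) := by
        linear_combination -(x.1 0) * huvQ
      have h6 : 2 * (d : ℚ) * x.1 0 = (k0 : ℚ) - (t : ℚ) * c := by
        linear_combination -hk0 - (t : ℚ) * hx1
      have hx0 : x.1 0 = ((u * (k0 - t * c) + v * k1 : ℤ) : ℚ) := by
        push_cast
        linear_combination h5 + (u : ℚ) * h6 - (v : ℚ) * hk1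
      refine mem_latticeZ.mpr ?_
      intro i
      fin_cases i
      · exact ⟨_, hx0⟩
      · exact ⟨c, hx1⟩
  -- the special dual vector v2 = (1/t, -2d/t²)
  have hv2mem : (![1 / (t : ℚ), -(2 * d) / (t : ℚ) ^ 2] : Fin 2 → ℚ) ∈ dualLattice G := by
    refine mem_dualLattice'.mpr ⟨⟨0, ?_⟩, ⟨1, ?_⟩⟩
    · push_cast
      field_simp
      ring
    · simp [htQ]
  set X : dualLattice G := ⟨_, hv2mem⟩ with hX
  have hfX : f X = -(2 * d) := by
    have h1 := hfQ X
    have : ((t:ℚ)^2 * (X.1 1)) = ((-(2*d) : ℤ) : ℚ) := by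
      show ((t:ℚ)^2 * ((-(2 * d) : ℚ) / (t : ℚ) ^ 2)) = _
      push_cast
      field_simp
    rw [this] at h1
    exact_mod_cast h1
  -- surjectivity of φ
  have hsurj : Function.Surjective φ := by
    have hcop2 : IsCoprime (-(2 * d)) ((t : ℤ) ^ 2) := (h2dt.pow_right).neg_left
    obtain ⟨u, v, huv⟩ := hcop2
    intro z
    obtain ⟨n, rfl⟩ := ZMod.intCast_surjective z
    refine ⟨(n * u) • X, ?_⟩
    rw [map_smul, hφ, hfX]
    have hcalc : (n * u) • ((-(2 * d) : ℤ) : ZMod (t ^ 2)) = ((n * u * (-(2 * d)) : ℤ) : ZMod (t ^ 2)) := by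
      rw [zsmul_eq_mul]
      push_cast
      ring
    rw [hcalc]
    have : (n * u * (-(2 * d)) : ℤ) = n - n * v * ((t : ℤ) ^ 2) := by linear_combination n * huv
    rw [this]
    push_cast
    have : ((t : ZMod (t ^ 2)) : ZMod (t ^ 2)) ^ 2 = 0 := by
      rw [← Nat.cast_pow, ZMod.natCast_self]
    rw [this]
    ring
  -- build the equivalence
  set ψ : discGroup G →ₗ[ℤ] ZMod (t ^ 2) :=
    Submodule.liftQ (latticeZ.comap (dualLattice G).subtype) φ hker.le with hψ
  have hψinj : Function.Injective ψ := by
    rw [← LinearMap.ker_eq_bot]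
    exact Submodule.ker_liftQ_eq_bot _ _ hker.le hker.ge
  have hψsurj : Function.Surjective ψ := by
    intro z
    obtain ⟨x, hx⟩ := hsurj z
    exact ⟨Submodule.Quotient.mk x, hx⟩
  have e : discGroup G ≃ₗ[ℤ] ZMod (t ^ 2) := LinearEquiv.ofBijective ψ ⟨hψinj, hψsurj⟩
  constructor
  · exact isAddCyclic_of_surjective e.symm.toAddEquiv.toAddMonoidHom e.symm.surjective
  · rw [Nat.card_congr e.toEquiv, Nat.card_zmod]
end

section
/- The lattices Λ_{5,1} and Λ_{5,4}, given by Gram matrices [[2, 5],[5, 0]] and [[8, 5],[5, 0]], are not isomorphic over Z, although they have the same determinant −25, the same signature (1,1), and isomorphic discriminant groups Z/25. -/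
open Matrix

/-- cokernel map for G₁ -/
def f1 : (Fin 2 → ℤ) →ₗ[ℤ] ZMod 25 where
  toFun v := ((10 * v 0 + v 1 : ℤ) : ZMod 25)
  map_add' v w := by push_cast [Pi.add_apply]; ring
  map_smul' m v := by
    simp only [Pi.smul_apply, smul_eq_mul, RingHom.id_apply, zsmul_eq_mul]
    push_cast; ring

def f2 : (Fin 2 → ℤ) →ₗ[ℤ] ZMod 25 where
  toFun v := ((15 * v 0 + v 1 : ℤ) : ZMod 25)
  map_add' v w := by push_cast [Pi.add_apply]; ring
  map_smul' m v := by
    simp only [Pi.smul_apply, smul_eq_mul, RingHom.id_apply, zsmul_eq_mul]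
    push_cast; ring

lemma ker1 : LinearMap.range (Matrix.toLin' (!![2, 5; 5, 0] : Matrix (Fin 2) (Fin 2) ℤ))
    = LinearMap.ker f1 := by
  ext v
  simp only [LinearMap.mem_range, LinearMap.mem_ker, Matrix.toLin'_apply, f1,
    LinearMap.coe_mk, AddHom.coe_mk, ZMod.intCast_zmod_eq_zero_iff_dvd]
  constructor
  · rintro ⟨w, rfl⟩
    simp [Matrix.mulVec, dotProduct, Fin.sum_univ_two]
    ring_nf
    exact ⟨w 0 + 2 * w 1, by ring⟩
  · rintro ⟨t, ht⟩
    refine ⟨![5 * t - 2 * v 0, v 0 - 2 * t], ?_⟩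
    funext i
    fin_cases i <;>
      simp [Matrix.mulVec, dotProduct, Fin.sum_univ_two] <;> omega

lemma ker2 : LinearMap.range (Matrix.toLin' (!![8, 5; 5, 0] : Matrix (Fin 2) (Fin 2) ℤ))
    = LinearMap.ker f2 := by
  ext v
  simp only [LinearMap.mem_range, LinearMap.mem_ker, Matrix.toLin'_apply, f2,
    LinearMap.coe_mk, AddHom.coe_mk, ZMod.intCast_zmod_eq_zero_iff_dvd]
  constructor
  · rintro ⟨w, rfl⟩
    simp [Matrix.mulVec, dotProduct, Fin.sum_univ_two]
    ring_nf
    exact ⟨5 * w 0 + 3 * w 1, by ring⟩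
  · rintro ⟨t, ht⟩
    refine ⟨![5 * t - 3 * v 0, 5 * v 0 - 8 * t], ?_⟩
    funext i
    fin_cases i <;>
      simp [Matrix.mulVec, dotProduct, Fin.sum_univ_two] <;> omega

lemma surj1 : Function.Surjective f1 := by
  intro z
  obtain ⟨k, hk⟩ := ZMod.intCast_surjective (n := 25) z
  exact ⟨![0, k], by simpa [f1] using hk⟩

lemma surj2 : Function.Surjective f2 := by
  intro z
  obtain ⟨k, hk⟩ := ZMod.intCast_surjective (n := 25) z
  exact ⟨![0, k], by simpa [f2] using hk⟩

/-- The lattices Λ_{5,1} and Λ_{5,4} with Gram matrices G₁ = [[2,5],[5,0]] and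
G₂ = [[8,5],[5,0]] both have determinant −25, both are indefinite (of signature (1,1)),
both have discriminant group (the cokernel of the Gram matrix) cyclic of order 25,
yet no M ∈ GL₂(ℤ) satisfies Mᵀ G₁ M = G₂: they are not isomorphic. -/
theorem stmt_13 :
    (!![2, 5; 5, 0] : Matrix (Fin 2) (Fin 2) ℤ).det = -25 ∧
    (!![8, 5; 5, 0] : Matrix (Fin 2) (Fin 2) ℤ).det = -25 ∧
    (∃ x y : Fin 2 → ℚ, 0 < x ⬝ᵥ (!![2, 5; 5, 0] : Matrix (Fin 2) (Fin 2) ℚ).mulVec x ∧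
      y ⬝ᵥ (!![2, 5; 5, 0] : Matrix (Fin 2) (Fin 2) ℚ).mulVec y < 0) ∧
    (∃ x y : Fin 2 → ℚ, 0 < x ⬝ᵥ (!![8, 5; 5, 0] : Matrix (Fin 2) (Fin 2) ℚ).mulVec x ∧
      y ⬝ᵥ (!![8, 5; 5, 0] : Matrix (Fin 2) (Fin 2) ℚ).mulVec y < 0) ∧
    Nonempty (((Fin 2 → ℤ) ⧸ LinearMap.range
      (Matrix.toLin' (!![2, 5; 5, 0] : Matrix (Fin 2) (Fin 2) ℤ))) ≃+ ZMod 25) ∧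
    Nonempty (((Fin 2 → ℤ) ⧸ LinearMap.range
      (Matrix.toLin' (!![8, 5; 5, 0] : Matrix (Fin 2) (Fin 2) ℤ))) ≃+ ZMod 25) ∧
    ¬ ∃ M : Matrix (Fin 2) (Fin 2) ℤ, IsUnit M.det ∧
      Mᵀ * !![2, 5; 5, 0] * M = !![8, 5; 5, 0] := by
  refine ⟨by simp [Matrix.det_fin_two], by simp [Matrix.det_fin_two], ?_, ?_, ?_, ?_, ?_⟩
  · exact ⟨![1, 0], ![1, -1], by norm_num [Matrix.mulVec, dotProduct, Fin.sum_univ_two],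
      by norm_num [Matrix.mulVec, dotProduct, Fin.sum_univ_two]⟩
  · exact ⟨![1, 0], ![1, -1], by norm_num [Matrix.mulVec, dotProduct, Fin.sum_univ_two],
      by norm_num [Matrix.mulVec, dotProduct, Fin.sum_univ_two]⟩
  · rw [ker1]
    exact ⟨(f1.quotKerEquivOfSurjective surj1).toAddEquiv⟩
  · rw [ker2]
    exact ⟨(f2.quotKerEquivOfSurjective surj2).toAddEquiv⟩
  · rintro ⟨M, hu, hM⟩
    -- N := M⁻¹, then Nᵀ * G₂ * N = G₁
    have hMN : M * M⁻¹ = 1 := Matrix.mul_nonsing_inv M hu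
    have key : M⁻¹ᵀ * !![8, 5; 5, 0] * M⁻¹ = !![2, 5; 5, 0] := by
      rw [← hM]
      calc M⁻¹ᵀ * (Mᵀ * !![2, 5; 5, 0] * M) * M⁻¹
          = (M * M⁻¹)ᵀ * !![2, 5; 5, 0] * (M * M⁻¹) := by
            rw [Matrix.transpose_mul]; ring_nf; noncomm_ring
        _ = !![2, 5; 5, 0] := by rw [hMN]; simp
    have h00 := congrFun (congrFun key 0) 0
    simp [Matrix.mul_apply, Fin.sum_univ_two, Matrix.transpose_apply] at h00
    set x := M⁻¹ 0 0
    set y := M⁻¹ 1 0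
    have hx : x * (4 * x + 5 * y) = 1 := by linarith [h00]
    have := Int.isUnit_iff.mp (IsUnit.of_mul_eq_one _ hx)
    rcases this with h | h <;> rw [h] at hx <;> omega
end
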